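/- Let $I = \bigcap_{j=1}^r \mathfrak{q}_j$ with $\mathfrak{q}_j = \langle x_i^{w_{j,i}} : i \in A_j\rangle$, and suppose the hypergraph with edges $A_1,\dots,A_r$ is whiskered with whiskers $A_{j_1},\dots,A_{j_t}$ attached at vertices $i_1,\dots,i_t$, satisfying: (i) $w_{j_k,i} \ge w_{j_k,i_k}$ for all $k$ and $i \in A_{j_k}$; (ii) for each $j \ne j_1,\dots,j_t$ there exists $k$ with $i_k \in A_j$ and $w_{j,i_k} \le w_{j_k,i_k}$. Then, in the polarization setting, the monomial $\tilde{f} = \prod_{k=1}^t (x_{i_k,1}\cdots x_{i_k,w_{j_k,i_k}})^s$ lies in $\tilde{I}^{(s)} = \bigcap_{j=1}^r \bigcap_{d} \langle x_{i,d_i} : i \in A_j\rangle^s$, where $d = (d_i)_{i \in A_j}$ ranges over $1 \le d_i \le w_{j,i}$. In particular $\alpha(\tilde{I}^{(s)}) \le s \sum_{k=1}^t w_{j_k,i_k}$. -/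

import Mathlib

open MvPolynomial Finset

/-- The monomial `x^a` in `K[x_1,…,x_n]`. -/
noncomputable def mon {K : Type*} [Field K] {n : ℕ} (a : Fin n → ℕ) :
    MvPolynomial (Fin n) K :=
  MvPolynomial.monomial (Finsupp.equivFunOnFinite.symm a) 1

/-- `α(L)`: the least total degree of a nonzero monomial of `L`. -/
noncomputable def alphaI {K σ : Type*} [Field K] (L : Ideal (MvPolynomial σ K)) : ℕ :=
  sInf {d : ℕ | ∃ m : σ →₀ ℕ, (m.sum fun _ e => e) = d ∧ MvPolynomial.monomial m (1 : K) ∈ L}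

/-- The weighted ideal `I_w`, generated by `x^{w(a)}` for monomials `x^a ∈ I`. -/
noncomputable def wIdeal {K : Type*} [Field K] {n : ℕ} (w : Fin n → ℕ)
    (I : Ideal (MvPolynomial (Fin n) K)) : Ideal (MvPolynomial (Fin n) K) :=
  Ideal.span {f | ∃ a : Fin n → ℕ, mon (K := K) a ∈ I ∧ f = mon (K := K) (fun i => w i * a i)}

/-- The irreducible monomial ideal `⟨x_i^{w i} : i ∈ A⟩`. -/
noncomputable def qIdeal {K : Type*} [Field K] {n : ℕ} (A : Finset (Fin n)) (w : Fin n → ℕ) :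
    Ideal (MvPolynomial (Fin n) K) :=
  Ideal.span ((fun i => (X i : MvPolynomial (Fin n) K) ^ w i) '' ↑A)

/-- `I` is a monomial ideal. -/
def IsMonomialIdeal {K : Type*} [Field K] {n : ℕ} (I : Ideal (MvPolynomial (Fin n) K)) : Prop :=
  ∃ S : Set (Fin n → ℕ), I = Ideal.span ((mon (K := K)) '' S)

/-- The `s`-th symbolic power `I^{(s)} = ⋂_{p ∈ Ass(I)} (I^s R_p ∩ R)`. -/
noncomputable def symbPow {R : Type*} [CommRing R] (I : Ideal R) (s : ℕ) : Ideal R :=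
  ⨅ p : {p : Ideal R // p ∈ associatedPrimes R (R ⧸ I)},
    letI : p.1.IsPrime := p.2.isPrime
    Ideal.comap (algebraMap R (Localization.AtPrime p.1))
      (Ideal.map (algebraMap R (Localization.AtPrime p.1)) (I ^ s))


lemma mon_sum_aux {K σ ι : Type*} [Field K] (S : Finset ι) (g : ι → (σ →₀ ℕ)) :
    (MvPolynomial.monomial (∑ i ∈ S, g i) (1 : K)) = ∏ i ∈ S, MvPolynomial.monomial (g i) 1 := by
  classical
  induction S using Finset.cons_induction with
  | empty => simp
  | cons a S ha ih =>
      rw [Finset.sum_cons, Finset.prod_cons, ← ih, MvPolynomial.monomial_mul, one_mul]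

/-- under the whiskered hypotheses, the monomial
`f̃ = ∏ₖ (x_{i_k,1} ⋯ x_{i_k,w_{j_k,i_k}})^s` lies in `Ĩ^{(s)}`, whence
`α(Ĩ^{(s)}) ≤ s ∑ₖ w_{j_k,i_k}`. -/
theorem polarized_monomial_mem_symbPow {K : Type*} [Field K] {n r t : ℕ}
    (A : Fin r → Finset (Fin n)) (w : Fin r → Fin n → ℕ)
    (hwpos : ∀ j, ∀ i ∈ A j, 0 < w j i)
    (jw : Fin t → Fin r) (iv : Fin t → Fin n)
    (hdisj : ∀ k k', k ≠ k' → Disjoint (A (jw k)) (A (jw k')))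
    (hcov : ∀ l : Fin r, (∀ k, l ≠ jw k) → ↑(A l) ⊆ Set.range iv)
    (hik : ∀ k, iv k ∈ A (jw k))
    (hik' : ∀ k k', iv k' ∈ A (jw k) → k' = k)
    (hcond1 : ∀ k, ∀ i ∈ A (jw k), w (jw k) (iv k) ≤ w (jw k) i)
    (hcond2 : ∀ l : Fin r, (∀ k, l ≠ jw k) →
      ∃ k, iv k ∈ A l ∧ w l (iv k) ≤ w (jw k) (iv k))
    (s : ℕ) (hs : 1 ≤ s) :
    (∏ k, (∏ d ∈ Finset.Icc 1 (w (jw k) (iv k)),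
        (X (iv k, d) : MvPolynomial (Fin n × ℕ) K)) ^ s) ∈
      (⨅ j, ⨅ d : Fin n → ℕ, ⨅ (_ : ∀ i ∈ A j, d i ∈ Finset.Icc 1 (w j i)),
        (Ideal.span ((fun i => (X (i, d i) : MvPolynomial (Fin n × ℕ) K)) '' ↑(A j))) ^ s) ∧
    alphaI (⨅ j, ⨅ d : Fin n → ℕ, ⨅ (_ : ∀ i ∈ A j, d i ∈ Finset.Icc 1 (w j i)),
        (Ideal.span ((fun i => (X (i, d i) : MvPolynomial (Fin n × ℕ) K)) '' ↑(A j))) ^ s) ≤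
      s * ∑ k, w (jw k) (iv k) := by
  classical
  have hmem : (∏ k, (∏ d ∈ Finset.Icc 1 (w (jw k) (iv k)),
        (X (iv k, d) : MvPolynomial (Fin n × ℕ) K)) ^ s) ∈
      (⨅ j, ⨅ d : Fin n → ℕ, ⨅ (_ : ∀ i ∈ A j, d i ∈ Finset.Icc 1 (w j i)),
        (Ideal.span ((fun i => (X (i, d i) : MvPolynomial (Fin n × ℕ) K)) '' ↑(A j))) ^ s) := by
    simp only [Ideal.mem_iInf]
    intro j d hd
    obtain ⟨k, hk, hle⟩ : ∃ k, iv k ∈ A j ∧ d (iv k) ≤ w (jw k) (iv k) := by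
      by_cases h : ∃ k, j = jw k
      · obtain ⟨k, rfl⟩ := h
        have := hd _ (hik k)
        rw [Finset.mem_Icc] at this
        exact ⟨k, hik k, this.2⟩
      · push_neg at h
        obtain ⟨k, hk1, hk2⟩ := hcond2 j h
        have := hd _ hk1
        rw [Finset.mem_Icc] at this
        exact ⟨k, hk1, le_trans this.2 hk2⟩
    have hd1 : 1 ≤ d (iv k) := by
      have := hd _ hk; rw [Finset.mem_Icc] at this; exact this.1
    have hX : (X (iv k, d (iv k)) : MvPolynomial (Fin n × ℕ) K) ∈
        Ideal.span ((fun i => (X (i, d i) : MvPolynomial (Fin n × ℕ) K)) '' ↑(A j)) :=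
      Ideal.subset_span ⟨iv k, hk, rfl⟩
    have hdvd : (X (iv k, d (iv k)) : MvPolynomial (Fin n × ℕ) K) ^ s ∣
        ∏ k', (∏ e ∈ Finset.Icc 1 (w (jw k') (iv k')),
          (X (iv k', e) : MvPolynomial (Fin n × ℕ) K)) ^ s := by
      refine dvd_trans (pow_dvd_pow_of_dvd ?_ s) (Finset.dvd_prod_of_mem _ (Finset.mem_univ k))
      exact Finset.dvd_prod_of_mem _ (Finset.mem_Icc.mpr ⟨hd1, hle⟩)
    obtain ⟨g, hg⟩ := hdvd
    rw [hg, mul_comm]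
    exact Ideal.mul_mem_left _ _ (Ideal.pow_mem_pow hX s)
  refine ⟨hmem, ?_⟩
  set m : (Fin n × ℕ) →₀ ℕ :=
    ∑ k, s • (∑ e ∈ Finset.Icc 1 (w (jw k) (iv k)),
      Finsupp.single ((iv k, e) : Fin n × ℕ) 1) with hmdef
  have hm : (MvPolynomial.monomial m (1 : K)) = ∏ k, (∏ e ∈ Finset.Icc 1 (w (jw k) (iv k)),
      (X (iv k, e) : MvPolynomial (Fin n × ℕ) K)) ^ s := by
    rw [hmdef, mon_sum_aux]
    refine Finset.prod_congr rfl fun k _ => ?_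
    rw [show (MvPolynomial.monomial (s • ∑ e ∈ Finset.Icc 1 (w (jw k) (iv k)),
        Finsupp.single ((iv k, e) : Fin n × ℕ) 1) (1 : K)) =
        (MvPolynomial.monomial (∑ e ∈ Finset.Icc 1 (w (jw k) (iv k)),
          Finsupp.single ((iv k, e) : Fin n × ℕ) 1) (1 : K)) ^ s by
      rw [MvPolynomial.monomial_pow, one_pow]]
    rw [mon_sum_aux]
    simp [MvPolynomial.X]
  have hdeg : (m.sum fun _ e => e) = s * ∑ k, w (jw k) (iv k) := by
    have h1 : (m.sum fun _ e => e) = Finsupp.weight (1 : (Fin n × ℕ) → ℕ) m := by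
      rw [← show Finsupp.degree m = Finsupp.weight (1 : (Fin n × ℕ) → ℕ) m from DFunLike.congr_fun Finsupp.degree_eq_weight_one m]; rfl
    rw [h1, hmdef, map_sum, Finset.mul_sum]
    refine Finset.sum_congr rfl fun k _ => ?_
    rw [map_nsmul, map_sum]
    simp [Finsupp.weight_apply, Finsupp.sum_single_index, Nat.card_Icc, mul_comm]
  exact Nat.sInf_le ⟨m, hdeg, hm ▸ hmem⟩
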